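/- Fix w > 0 and define f₁(x₁,x₂) = ((−w²x₂ + 2(1+w²x₁²)^{3/2})/(1+w²(x₁²+x₂²)))·x₂ + 1 and f₂(x₁,x₂) = ((w²x₂ − 2(1+w²x₁²)^{3/2})/(1+w²(x₁²+x₂²)))·x₁. Then the function h_w(x₁,x₂) = x₂/√(1+w²x₁²) + x₁² + x₂² is a first integral of the system ξ₁' = f₁(ξ₁,ξ₂), ξ₂' = f₂(ξ₁,ξ₂): for any solution (ξ₁(s), ξ₂(s)), the function s ↦ h_w(ξ₁(s), ξ₂(s)) is constant. -/

import Mathlib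

open Real

/-- `h_w(x₁,x₂) = x₂/√(1+w²x₁²) + x₁² + x₂²` is a first integral of the system
`ξ₁' = f₁(ξ₁,ξ₂)`, `ξ₂' = f₂(ξ₁,ξ₂)`. -/
theorem hw_first_integral (w : ℝ) (hw : 0 < w) (ξ₁ ξ₂ : ℝ → ℝ)
    (h₁ : ∀ s, HasDerivAt ξ₁
      ((-(w ^ 2 * ξ₂ s) + 2 * (1 + w ^ 2 * (ξ₁ s) ^ 2) ^ ((3 : ℝ) / 2)) /
          (1 + w ^ 2 * ((ξ₁ s) ^ 2 + (ξ₂ s) ^ 2)) * ξ₂ s + 1) s)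
    (h₂ : ∀ s, HasDerivAt ξ₂
      ((w ^ 2 * ξ₂ s - 2 * (1 + w ^ 2 * (ξ₁ s) ^ 2) ^ ((3 : ℝ) / 2)) /
          (1 + w ^ 2 * ((ξ₁ s) ^ 2 + (ξ₂ s) ^ 2)) * ξ₁ s) s) :
    ∀ s t,
      ξ₂ s / Real.sqrt (1 + w ^ 2 * (ξ₁ s) ^ 2) + (ξ₁ s) ^ 2 + (ξ₂ s) ^ 2 =
      ξ₂ t / Real.sqrt (1 + w ^ 2 * (ξ₁ t) ^ 2) + (ξ₁ t) ^ 2 + (ξ₂ t) ^ 2 := by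
  have key : ∀ s, HasDerivAt
      (fun s => ξ₂ s / Real.sqrt (1 + w ^ 2 * (ξ₁ s) ^ 2) + (ξ₁ s) ^ 2 + (ξ₂ s) ^ 2)
      0 s := by
    intro s
    set x := ξ₁ s with hx
    set y := ξ₂ s with hy
    have hA : (0:ℝ) < 1 + w ^ 2 * x ^ 2 := by positivity
    have hD : (0:ℝ) < 1 + w ^ 2 * (x ^ 2 + y ^ 2) := by positivity
    have hr : 0 < Real.sqrt (1 + w ^ 2 * x ^ 2) := Real.sqrt_pos.mpr hA
    set r := Real.sqrt (1 + w ^ 2 * x ^ 2) with hrdef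
    have hsq : r ^ 2 = 1 + w ^ 2 * x ^ 2 := Real.sq_sqrt hA.le
    have hrpow : (1 + w ^ 2 * x ^ 2) ^ ((3 : ℝ) / 2) = r ^ 3 := by
      rw [show ((3:ℝ)/2) = ((1:ℝ)/2) * 3 by norm_num, Real.rpow_mul hA.le,
        ← Real.sqrt_eq_rpow, show (3:ℝ) = ((3:ℕ):ℝ) by norm_num, Real.rpow_natCast]
    set d1 := (-(w ^ 2 * y) + 2 * (1 + w ^ 2 * x ^ 2) ^ ((3 : ℝ) / 2)) /
          (1 + w ^ 2 * (x ^ 2 + y ^ 2)) * y + 1 with hd1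
    set d2 := (w ^ 2 * y - 2 * (1 + w ^ 2 * x ^ 2) ^ ((3 : ℝ) / 2)) /
          (1 + w ^ 2 * (x ^ 2 + y ^ 2)) * x with hd2
    have H1 : HasDerivAt ξ₁ d1 s := h₁ s
    have H2 : HasDerivAt ξ₂ d2 s := h₂ s
    have hinner : HasDerivAt (fun s => 1 + w ^ 2 * (ξ₁ s) ^ 2) (w ^ 2 * (2 * x * d1)) s := by
      have := ((H1.pow 2).const_mul (w ^ 2)).const_add 1
      simpa [mul_comm, mul_assoc, mul_left_comm] using this
    have hsqrt : HasDerivAt (fun s => Real.sqrt (1 + w ^ 2 * (ξ₁ s) ^ 2))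
        (w ^ 2 * (2 * x * d1) / (2 * r)) s := by
      have h : HasDerivAt (fun s => Real.sqrt (1 + w ^ 2 * (ξ₁ s) ^ 2))
          (1 / (2 * Real.sqrt (1 + w ^ 2 * x ^ 2)) * (w ^ 2 * (2 * x * d1))) s :=
        (Real.hasDerivAt_sqrt hA.ne').comp s hinner
      convert h using 1
      rw [← hrdef]; ring
    have hdiv : HasDerivAt (fun s => ξ₂ s / Real.sqrt (1 + w ^ 2 * (ξ₁ s) ^ 2))
        ((d2 * r - y * (w ^ 2 * (2 * x * d1) / (2 * r))) / r ^ 2) s :=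
      H2.div hsqrt hr.ne'
    have htotal : HasDerivAt
        (fun s => ξ₂ s / Real.sqrt (1 + w ^ 2 * (ξ₁ s) ^ 2) + (ξ₁ s) ^ 2 + (ξ₂ s) ^ 2)
        ((d2 * r - y * (w ^ 2 * (2 * x * d1) / (2 * r))) / r ^ 2 + 2 * x * d1 + 2 * y * d2)
        s := by
      have := (hdiv.add (H1.pow 2)).add (H2.pow 2)
      simpa [mul_comm, mul_assoc, mul_left_comm, Pi.add_def, Pi.pow_def, ← hx, ← hy] using this
    convert htotal using 1
    have hD' : 1 + w ^ 2 * (x ^ 2 + y ^ 2) = r ^ 2 + w ^ 2 * y ^ 2 := by rw [hsq]; ring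
    have hD'' : r ^ 2 + w ^ 2 * y ^ 2 ≠ 0 := by rw [← hD']; exact hD.ne'
    rw [hd1, hd2, hrpow, hD']
    field_simp
    ring
  intro s t
  exact is_const_of_deriv_eq_zero (fun u => (key u).differentiableAt)
    (fun u => (key u).deriv) s t
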